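/- arXiv:math/0610167 — 3 statements merged into one kernel-verified Lean document; each statement's English description precedes it below -/
import Mathlib

section
/- Let C be a finite-dimensional chain complex over the field Z/2 with basis B. Suppose x_i, x_j are basis elements with x_j appearing in d(x_i). Define a new complex C' whose underlying vector space is spanned by B \ {x_i, x_j}, with differential d'(x_k) = d(x_k) + d(x_i) if x_j appears in d(x_k), and d'(x_k) = d(x_k) otherwise, where in both cases the result is truncated to the span of B \ {x_i, x_j}. Then (d')^2 = 0 and H_*(C') is isomorphic to H_*(C). -/
section CancellationAux

variable {m : ℕ}

private lemma sum_subtype_compl {i j : Fin m} (hij : i ≠ j) (f : Fin m → ZMod 2) :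
    ∑ p : {k : Fin m // k ≠ i ∧ k ≠ j}, f ↑p = (∑ p : Fin m, f p) + f i + f j := by
  have h1 : ∑ p ∈ Finset.univ \ ({i, j} : Finset (Fin m)), f p
      = ∑ p : {k : Fin m // k ≠ i ∧ k ≠ j}, f ↑p :=
    Finset.sum_subtype _ (fun x => by simp) f
  rw [← h1, Finset.sum_sdiff_eq_sub (Finset.subset_univ _), Finset.sum_pair hij,
    CharTwo.sub_eq_add]
  ring

/-- The chain map `C → C'`. -/
private def Fmat (d : Matrix (Fin m) (Fin m) (ZMod 2)) (i j : Fin m) :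
    Matrix {k : Fin m // k ≠ i ∧ k ≠ j} (Fin m) (ZMod 2) :=
  fun k l => (if l = (k : Fin m) then 1 else 0) + (if l = i then d k j else 0)

/-- The chain map `C' → C`. -/
private def Gmat (d : Matrix (Fin m) (Fin m) (ZMod 2)) (i j : Fin m) :
    Matrix (Fin m) {k : Fin m // k ≠ i ∧ k ≠ j} (ZMod 2) :=
  fun t l => (if t = (l : Fin m) then 1 else 0) + (if t = j then d i l else 0)

/-- The chain homotopy. -/
private def Hmat (i j : Fin m) : Matrix (Fin m) (Fin m) (ZMod 2) :=
  fun t s => if t = j ∧ s = i then 1 else 0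

private lemma FGmat (d : Matrix (Fin m) (Fin m) (ZMod 2)) (i j : Fin m) (hij : i ≠ j) :
    Fmat d i j * Gmat d i j = 1 := by
  ext k l
  obtain ⟨k, hki, hkj⟩ := k; obtain ⟨l, hli, hlj⟩ := l
  simp [Matrix.mul_apply, Fmat, Gmat, Matrix.one_apply, mul_add, add_mul,
    Finset.sum_add_distrib, mul_ite, ite_mul, mul_one, mul_zero, zero_mul,
    Finset.sum_ite_eq, Finset.sum_ite_eq', hkj, hij, hli, Ne.symm hkj,
    Ne.symm hij, Ne.symm hli, eq_comm]

private lemma GFmat (d : Matrix (Fin m) (Fin m) (ZMod 2)) (i j : Fin m)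
    (hd : d * d = 0) (hij : i ≠ j) (h : d i j = 1) :
    Gmat d i j * Fmat d i j = 1 + d * Hmat i j + Hmat i j * d := by
  have hdd : ∀ a b, ∑ p, d a p * d p b = 0 := by
    intro a b
    have := congrFun (congrFun hd a) b
    simpa [Matrix.mul_apply] using this
  ext t s
  rw [Matrix.mul_apply]
  have e1 : ∀ p : {k : Fin m // k ≠ i ∧ k ≠ j}, Gmat d i j t p * Fmat d i j p s =
      (fun x => ((if t = x then 1 else 0) + (if t = j then d i x else 0)) *
        ((if s = x then 1 else 0) + (if s = i then d x j else 0))) ↑p := fun p => rfl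
  rw [Finset.sum_congr rfl (fun p _ => e1 p),
    sum_subtype_compl hij (fun x => ((if t = x then 1 else 0) + (if t = j then d i x else 0)) *
        ((if s = x then 1 else 0) + (if s = i then d x j else 0)))]
  by_cases htj : t = j <;> by_cases hsi : s = i <;>
    simp [Matrix.mul_apply, Matrix.one_apply, Hmat, mul_add, add_mul,
      Finset.sum_add_distrib, mul_ite, ite_mul, mul_one, mul_zero, zero_mul,
      Finset.sum_ite_eq, Finset.sum_ite_eq', hdd, h, hij, Ne.symm hij, htj, hsi,
      CharTwo.add_self_eq_zero, eq_comm] <;>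
    try ring

private lemma Fdmat (d : Matrix (Fin m) (Fin m) (ZMod 2)) (i j : Fin m)
    (hd : d * d = 0) (hij : i ≠ j) (h : d i j = 1)
    (d' : Matrix {k : Fin m // k ≠ i ∧ k ≠ j} {k : Fin m // k ≠ i ∧ k ≠ j} (ZMod 2))
    (hd' : ∀ k l, d' k l = d k l + d k j * d i l) :
    Fmat d i j * d = d' * Fmat d i j := by
  have hdd : ∀ a b, ∑ p, d a p * d p b = 0 := by
    intro a b
    have := congrFun (congrFun hd a) b
    simpa [Matrix.mul_apply] using this
  have hddA : ∀ (c : ZMod 2) a b, ∑ x, d a x * (c * d x b) = 0 := by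
    intro c a b
    simp only [mul_left_comm]
    rw [← Finset.mul_sum, hdd, mul_zero]
  have hddB : ∀ (c : ZMod 2) a b, ∑ x, c * (d a x * d x b) = 0 := by
    intro c a b
    rw [← Finset.mul_sum, hdd, mul_zero]
  have hddC : ∀ (c : ZMod 2) a b, ∑ x, d a x * d x b * c = 0 := by
    intro c a b
    rw [← Finset.sum_mul, hdd, zero_mul]
  have hddD : ∀ (c : ZMod 2) a b, ∑ x, c * d a x * d x b = 0 := by
    intro c a b
    simp only [mul_assoc]
    exact hddB c a b
  have hddE : ∀ (c : ZMod 2) a b, ∑ x, d a x * (d x b * c) = 0 := by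
    intro c a b
    simp only [← mul_assoc]
    exact hddC c a b
  ext k l
  obtain ⟨k, hki, hkj⟩ := k
  rw [Matrix.mul_apply, Matrix.mul_apply]
  have e1 : ∀ p : {k : Fin m // k ≠ i ∧ k ≠ j},
      d' ⟨k, hki, hkj⟩ p * Fmat d i j p l =
      (fun x => (d k x + d k j * d i x) *
        ((if l = x then 1 else 0) + (if l = i then d x j else 0))) ↑p := fun p => by
    rw [hd']; rfl
  rw [Finset.sum_congr rfl (fun p _ => e1 p),
    sum_subtype_compl hij (fun x => (d k x + d k j * d i x) *
      ((if l = x then 1 else 0) + (if l = i then d x j else 0)))]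
  by_cases hli : l = i <;>
    simp [Fmat, mul_add, add_mul, Finset.sum_add_distrib, mul_ite, ite_mul,
      mul_one, mul_zero, zero_mul, Finset.sum_ite_eq, Finset.sum_ite_eq',
      hdd, h, hij, Ne.symm hij, hli, hki, hkj, Ne.symm hki, Ne.symm hkj,
      hddA, hddB, hddC, hddD, hddE, CharTwo.add_self_eq_zero, eq_comm]

private lemma dGmat (d : Matrix (Fin m) (Fin m) (ZMod 2)) (i j : Fin m)
    (hd : d * d = 0) (hij : i ≠ j) (h : d i j = 1)
    (d' : Matrix {k : Fin m // k ≠ i ∧ k ≠ j} {k : Fin m // k ≠ i ∧ k ≠ j} (ZMod 2))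
    (hd' : ∀ k l, d' k l = d k l + d k j * d i l) :
    d * Gmat d i j = Gmat d i j * d' := by
  have hdd : ∀ a b, ∑ p, d a p * d p b = 0 := by
    intro a b
    have := congrFun (congrFun hd a) b
    simpa [Matrix.mul_apply] using this
  have hddA : ∀ (c : ZMod 2) a b, ∑ x, d a x * (c * d x b) = 0 := by
    intro c a b
    simp only [mul_left_comm]
    rw [← Finset.mul_sum, hdd, mul_zero]
  have hddB : ∀ (c : ZMod 2) a b, ∑ x, c * (d a x * d x b) = 0 := by
    intro c a b
    rw [← Finset.mul_sum, hdd, mul_zero]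
  have hddC : ∀ (c : ZMod 2) a b, ∑ x, d a x * d x b * c = 0 := by
    intro c a b
    rw [← Finset.sum_mul, hdd, zero_mul]
  have hddD : ∀ (c : ZMod 2) a b, ∑ x, c * d a x * d x b = 0 := by
    intro c a b
    simp only [mul_assoc]
    exact hddB c a b
  have hddE : ∀ (c : ZMod 2) a b, ∑ x, d a x * (d x b * c) = 0 := by
    intro c a b
    simp only [← mul_assoc]
    exact hddC c a b
  ext t l
  obtain ⟨l, hli, hlj⟩ := l
  rw [Matrix.mul_apply, Matrix.mul_apply]
  have e1 : ∀ p : {k : Fin m // k ≠ i ∧ k ≠ j},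
      Gmat d i j t p * d' p ⟨l, hli, hlj⟩ =
      (fun x => ((if t = x then 1 else 0) + (if t = j then d i x else 0)) *
        (d x l + d x j * d i l)) ↑p := fun p => by
    rw [hd']; rfl
  rw [Finset.sum_congr rfl (fun p _ => e1 p),
    sum_subtype_compl hij (fun x => ((if t = x then 1 else 0) + (if t = j then d i x else 0)) *
        (d x l + d x j * d i l))]
  by_cases htj : t = j <;>
    simp [Gmat, mul_add, add_mul, Finset.sum_add_distrib, mul_ite, ite_mul,
      mul_one, mul_zero, zero_mul, Finset.sum_ite_eq, Finset.sum_ite_eq',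
      hdd, h, hij, Ne.symm hij, htj, hli, hlj, Ne.symm hli, Ne.symm hlj,
      hddA, hddB, hddC, hddD, hddE, CharTwo.add_self_eq_zero, eq_comm]

end CancellationAux

set_option maxHeartbeats 1000000 in
/-- Gaussian elimination (cancellation) for chain complexes over `ℤ/2`.  `C` is the
free `ℤ/2`-module on the basis `Fin m`, with differential given by the matrix `d`
(`d k l` is the coefficient of `x_l` in `d(x_k)`), satisfying `d² = 0`.  If `x_j`
appears in `d(x_i)` (i.e. `d i j = 1`), then the complex `C'` spanned by the remaining
basis elements, with differential `d' k l = d k l + d k j * d i l` (i.e.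
`d'(x_k) = d(x_k) + d(x_i)` truncated, when `x_j` appears in `d(x_k)`, and the
truncation of `d(x_k)` otherwise), satisfies `d'² = 0` and has homology isomorphic to
that of `C`. -/
theorem cancellation_lemma {m : ℕ} (d : Matrix (Fin m) (Fin m) (ZMod 2))
    (hd : d * d = 0) (i j : Fin m) (hij : i ≠ j) (h : d i j = 1)
    (d' : Matrix {k : Fin m // k ≠ i ∧ k ≠ j} {k : Fin m // k ≠ i ∧ k ≠ j} (ZMod 2))
    (hd' : ∀ k l, d' k l = d k l + d k j * d i l) :
    d' * d' = 0 ∧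
      Nonempty (
        (↥(LinearMap.ker d'.mulVecLin) ⧸
            Submodule.comap (LinearMap.ker d'.mulVecLin).subtype
              (LinearMap.range d'.mulVecLin))
          ≃ₗ[ZMod 2]
        (↥(LinearMap.ker d.mulVecLin) ⧸
            Submodule.comap (LinearMap.ker d.mulVecLin).subtype
              (LinearMap.range d.mulVecLin))) := by
  have hFd := Fdmat d i j hd hij h d' hd'
  have hdG := dGmat d i j hd hij h d' hd'
  have hFG := FGmat d i j hij
  have hGF := GFmat d i j hd hij h
  -- d'² = 0
  have hd'2 : d' * d' = 0 := by
    have t1 : d' * d' * Fmat d i j = 0 := by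
      calc d' * d' * Fmat d i j = d' * (d' * Fmat d i j) := Matrix.mul_assoc _ _ _
        _ = d' * (Fmat d i j * d) := by rw [hFd]
        _ = d' * Fmat d i j * d := (Matrix.mul_assoc _ _ _).symm
        _ = Fmat d i j * d * d := by rw [hFd]
        _ = Fmat d i j * (d * d) := Matrix.mul_assoc _ _ _
        _ = 0 := by rw [hd, Matrix.mul_zero]
    calc d' * d' = d' * d' * (Fmat d i j * Gmat d i j) := by rw [hFG, Matrix.mul_one]
      _ = d' * d' * Fmat d i j * Gmat d i j := (Matrix.mul_assoc _ _ _).symm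
      _ = 0 := by rw [t1, Matrix.zero_mul]
  refine ⟨hd'2, ?_⟩
  set D := d.mulVecLin with hDdef
  set D' := d'.mulVecLin with hD'def
  set F := (Fmat d i j).mulVecLin with hFdef
  set G := (Gmat d i j).mulVecLin with hGdef
  set Hl := (Hmat i j).mulVecLin with hHdef
  have cFd : F.comp D = D'.comp F := by
    rw [hFdef, hDdef, hD'def, ← Matrix.mulVecLin_mul, ← Matrix.mulVecLin_mul, hFd]
  have cdG : D.comp G = G.comp D' := by
    rw [hGdef, hDdef, hD'def, ← Matrix.mulVecLin_mul, ← Matrix.mulVecLin_mul, hdG]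
  have cFG : F.comp G = LinearMap.id := by
    rw [hFdef, hGdef, ← Matrix.mulVecLin_mul, hFG, Matrix.mulVecLin_one]
  have cGF : ∀ v, G (F v) = v + D (Hl v) + Hl (D v) := by
    intro v
    show (Gmat d i j).mulVec ((Fmat d i j).mulVec v)
        = v + d.mulVec ((Hmat i j).mulVec v) + (Hmat i j).mulVec (d.mulVec v)
    rw [Matrix.mulVec_mulVec, hGF, Matrix.add_mulVec, Matrix.add_mulVec,
      Matrix.one_mulVec, ← Matrix.mulVec_mulVec, ← Matrix.mulVec_mulVec]
  -- restricted maps between kernels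
  have hGker : ∀ x ∈ LinearMap.ker D', G x ∈ LinearMap.ker D := by
    intro x hx
    rw [LinearMap.mem_ker] at hx ⊢
    have e := DFunLike.congr_fun cdG x
    simp only [LinearMap.comp_apply] at e
    rw [e, hx, map_zero]
  have hFker : ∀ x ∈ LinearMap.ker D, F x ∈ LinearMap.ker D' := by
    intro x hx
    rw [LinearMap.mem_ker] at hx ⊢
    have e := DFunLike.congr_fun cFd x
    simp only [LinearMap.comp_apply] at e
    rw [← e, hx, map_zero]
  set G' : LinearMap.ker D' →ₗ[ZMod 2] LinearMap.ker D := G.restrict hGker with hG'def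
  set F' : LinearMap.ker D →ₗ[ZMod 2] LinearMap.ker D' := F.restrict hFker with hF'def
  set P := Submodule.comap (LinearMap.ker D).subtype (LinearMap.range D) with hPdef
  set P' := Submodule.comap (LinearMap.ker D').subtype (LinearMap.range D') with hP'def
  have hφ : P' ≤ Submodule.comap G' P := by
    intro x hx
    rw [hP'def, Submodule.mem_comap, Submodule.subtype_apply] at hx
    obtain ⟨w, hw⟩ := hx
    rw [Submodule.mem_comap, hPdef, Submodule.mem_comap, Submodule.subtype_apply]
    refine ⟨G w, ?_⟩
    have e := DFunLike.congr_fun cdG w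
    simp only [LinearMap.comp_apply] at e
    have : (G' x : Fin m → ZMod 2) = G (x : {k : Fin m // k ≠ i ∧ k ≠ j} → ZMod 2) := rfl
    rw [this, ← hw, ← e]
  have hψ : P ≤ Submodule.comap F' P' := by
    intro x hx
    rw [hPdef, Submodule.mem_comap, Submodule.subtype_apply] at hx
    obtain ⟨w, hw⟩ := hx
    rw [Submodule.mem_comap, hP'def, Submodule.mem_comap, Submodule.subtype_apply]
    refine ⟨F w, ?_⟩
    have e := DFunLike.congr_fun cFd w
    simp only [LinearMap.comp_apply] at e
    have : (F' x : {k : Fin m // k ≠ i ∧ k ≠ j} → ZMod 2) = F (x : Fin m → ZMod 2) := rfl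
    rw [this, ← hw, e]
  set φ := Submodule.mapQ P' P G' hφ with hφdef
  set ψ := Submodule.mapQ P P' F' hψ with hψdef
  refine ⟨LinearEquiv.ofLinear φ ψ ?_ ?_⟩
  · -- φ ∘ ψ = id on H(C) : uses the homotopy
    apply Submodule.quot_hom_ext
    intro x
    rw [LinearMap.comp_apply, LinearMap.id_apply, hψdef, Submodule.mapQ_apply,
      hφdef, Submodule.mapQ_apply]
    rw [Submodule.Quotient.eq]
    have hx : D (x : Fin m → ZMod 2) = 0 := x.2
    have e : (G' (F' x) : Fin m → ZMod 2) = G (F (x : Fin m → ZMod 2)) := rfl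
    rw [hPdef, Submodule.mem_comap, Submodule.subtype_apply]
    refine ⟨Hl (x : Fin m → ZMod 2), ?_⟩
    have : (↑(G' (F' x) - x) : Fin m → ZMod 2) = G (F ↑x) - ↑x := by
      simp [e]
    rw [this, cGF, hx, map_zero]
    abel
  · -- ψ ∘ φ = id on H(C') : F ∘ G = id exactly
    apply Submodule.quot_hom_ext
    intro x
    rw [LinearMap.comp_apply, LinearMap.id_apply, hφdef, Submodule.mapQ_apply,
      hψdef, Submodule.mapQ_apply]
    congr 1
    apply Subtype.ext
    have e : (F' (G' x) : {k : Fin m // k ≠ i ∧ k ≠ j} → ZMod 2)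
        = F (G (x : {k : Fin m // k ≠ i ∧ k ≠ j} → ZMod 2)) := rfl
    rw [e]
    exact DFunLike.congr_fun cFG (x : {k : Fin m // k ≠ i ∧ k ≠ j} → ZMod 2)
end

section
/- For a point p in the plane not on a closed polygonal curve C built from horizontal and vertical grid segments, the winding number of C around p, computed as the signed count of intersections of C with any ray from p to infinity in generic position, is independent of the choice of ray. -/
open Finset

private lemma aux_sum_shift (f : ℤ → ℤ) {l u : ℤ} (h : l ≤ u) :
    ∑ t ∈ Finset.Icc l u, f (t - 1) =
      ∑ t ∈ Finset.Icc l u, f t + f (l - 1) - f u := by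
  have h1 : ∑ t ∈ Finset.Icc l u, f (t - 1) = ∑ t ∈ Finset.Icc (l - 1) (u - 1), f t := by
    have hm : Finset.Icc (l - 1) (u - 1) = (Finset.Icc l u).map (addRightEmbedding (-1)) := by
      rw [Finset.map_add_right_Icc]; norm_num [sub_eq_add_neg]
    rw [hm, Finset.sum_map]
    apply Finset.sum_congr rfl
    intro t _
    simp [addRightEmbedding, sub_eq_add_neg]
  have e1 : Finset.Icc (l - 1) (u - 1) = insert (l - 1) (Finset.Ico l u) := by
    ext t; simp only [Finset.mem_Icc, Finset.mem_insert, Finset.mem_Ico]; omega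
  have e2 : Finset.Icc l u = insert u (Finset.Ico l u) := by
    ext t; simp only [Finset.mem_Icc, Finset.mem_insert, Finset.mem_Ico]; omega
  have n1 : (l - 1) ∉ Finset.Ico l u := by simp
  have n2 : u ∉ Finset.Ico l u := by simp
  rw [h1, e1, e2, Finset.sum_insert n1, Finset.sum_insert n2]
  ring

private lemma aux_support_sum (c : ℤ × ℤ →₀ ℤ) (P : ℤ × ℤ → Prop) [DecidablePred P]
    (B : Finset (ℤ × ℤ)) (hB : ∀ q ∈ c.support, P q → q ∈ B) (hP : ∀ q ∈ B, P q) :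
    ∑ q ∈ c.support, (if P q then c q else 0) = ∑ q ∈ B, c q := by
  have h1 : ∑ q ∈ c.support, (if P q then c q else 0)
      = ∑ q ∈ c.support ∪ B, (if P q then c q else 0) := by
    apply Finset.sum_subset (Finset.subset_union_left)
    intro q hq hq'
    have : c q = 0 := by
      by_contra hc
      exact hq' (Finsupp.mem_support_iff.mpr hc)
    simp [this]
  have h2 : ∑ q ∈ B, (if P q then c q else 0)
      = ∑ q ∈ c.support ∪ B, (if P q then c q else 0) := by
    apply Finset.sum_subset (Finset.subset_union_right)
    intro q hq hq'
    rcases Finset.mem_union.mp hq with h | h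
    · by_cases hPq : P q
      · exact absurd (hB q h hPq) hq'
      · simp [hPq]
    · exact absurd h hq'
  rw [h1, ← h2]
  apply Finset.sum_congr rfl
  intro q hq
  simp [hP q hq]

/-- Winding number is independent of the choice of ray.  A closed oriented curve made
of horizontal and vertical grid segments is encoded as a finitely supported `1`-cycle:
`cv (x, y)` is the coefficient of the upward unit edge from `(x,y)` to `(x,y+1)` and
`ch (x, y)` that of the rightward unit edge from `(x,y)` to `(x+1,y)`; the cycle
condition says the boundary vanishes at every vertex.  For a point
`p = (a + 1/2, b + 1/2)` off the curve, the signed crossing counts along the four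
generic rays from `p` (leftward, rightward, downward, upward), with signs normalized
so that a counterclockwise circle has winding number `1` about interior points, all
agree. -/
theorem winding_number_ray_independent (cv ch : ℤ × ℤ →₀ ℤ)
    (hcycle : ∀ x y : ℤ, cv (x, y - 1) + ch (x - 1, y) = cv (x, y) + ch (x, y))
    (a b : ℤ) :
    let wleft : ℤ := -∑ q ∈ cv.support, if q.2 = b ∧ q.1 ≤ a then cv q else 0
    let wright : ℤ := ∑ q ∈ cv.support, if q.2 = b ∧ a + 1 ≤ q.1 then cv q else 0
    let wdown : ℤ := ∑ q ∈ ch.support, if q.1 = a ∧ q.2 ≤ b then ch q else 0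
    let wup : ℤ := -∑ q ∈ ch.support, if q.1 = a ∧ b + 1 ≤ q.2 then ch q else 0
    wleft = wright ∧ wleft = wdown ∧ wleft = wup := by
  intro wleft wright wdown wup
  -- choose a large bound N
  set K : ℕ := (cv.support ∪ ch.support).sup (fun q => q.1.natAbs ⊔ q.2.natAbs) with hK
  set N : ℤ := (K : ℤ) + a.natAbs + b.natAbs + 2 with hN
  have hbound : ∀ q ∈ cv.support ∪ ch.support, -N < q.1 ∧ q.1 < N ∧ -N < q.2 ∧ q.2 < N := by
    intro q hq
    have := Finset.le_sup (f := fun q : ℤ × ℤ => q.1.natAbs ⊔ q.2.natAbs) hq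
    have h1 : q.1.natAbs ≤ K := le_trans (le_max_left _ _) this
    have h2 : q.2.natAbs ≤ K := le_trans (le_max_right _ _) this
    omega
  have hzv : ∀ x y : ℤ, (x ≤ -N ∨ N ≤ x ∨ y ≤ -N ∨ N ≤ y) → cv (x, y) = 0 := by
    intro x y h
    by_contra hc
    have hm : (x, y) ∈ cv.support ∪ ch.support :=
      Finset.mem_union_left _ (Finsupp.mem_support_iff.mpr hc)
    have := hbound _ hm
    simp only at this
    omega
  have hzh : ∀ x y : ℤ, (x ≤ -N ∨ N ≤ x ∨ y ≤ -N ∨ N ≤ y) → ch (x, y) = 0 := by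
    intro x y h
    by_contra hc
    have hm : (x, y) ∈ cv.support ∪ ch.support :=
      Finset.mem_union_right _ (Finsupp.mem_support_iff.mpr hc)
    have := hbound _ hm
    simp only at this
    omega
  have haN : -N ≤ a ∧ a + 1 ≤ N := by omega
  have hbN : -N ≤ b ∧ b + 1 ≤ N := by omega
  -- rectangle identity
  have rect : ∀ x0 x1 y0 y1 : ℤ, x0 ≤ x1 → y0 ≤ y1 →
      ∑ x ∈ Finset.Icc x0 x1, (cv (x, y0 - 1) - cv (x, y1)) =
      ∑ y ∈ Finset.Icc y0 y1, (ch (x1, y) - ch (x0 - 1, y)) := by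
    intro x0 x1 y0 y1 hx hy
    have key : ∑ x ∈ Finset.Icc x0 x1, ∑ y ∈ Finset.Icc y0 y1, (cv (x, y - 1) - cv (x, y))
        = ∑ x ∈ Finset.Icc x0 x1, ∑ y ∈ Finset.Icc y0 y1, (ch (x, y) - ch (x - 1, y)) := by
      apply Finset.sum_congr rfl; intro x _
      apply Finset.sum_congr rfl; intro y _
      have := hcycle x y; omega
    have L : ∑ x ∈ Finset.Icc x0 x1, ∑ y ∈ Finset.Icc y0 y1, (cv (x, y - 1) - cv (x, y))
        = ∑ x ∈ Finset.Icc x0 x1, (cv (x, y0 - 1) - cv (x, y1)) := by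
      apply Finset.sum_congr rfl; intro x _
      rw [Finset.sum_sub_distrib, aux_sum_shift (fun t => cv (x, t)) hy]
      ring
    have R : ∑ x ∈ Finset.Icc x0 x1, ∑ y ∈ Finset.Icc y0 y1, (ch (x, y) - ch (x - 1, y))
        = ∑ y ∈ Finset.Icc y0 y1, (ch (x1, y) - ch (x0 - 1, y)) := by
      rw [Finset.sum_comm]
      apply Finset.sum_congr rfl; intro y _
      rw [Finset.sum_sub_distrib, aux_sum_shift (fun t => ch (t, y)) hx]
      ring
    rw [← L, key, R]
  -- conversions of support sums to interval sums
  have cleft : ∑ q ∈ cv.support, (if q.2 = b ∧ q.1 ≤ a then cv q else 0)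
      = ∑ x ∈ Finset.Icc (-N) a, cv (x, b) := by
    rw [aux_support_sum cv _ ((Finset.Icc (-N) a) ×ˢ {b})]
    · rw [Finset.sum_product]
      simp
    · intro q hq hPq
      have := hbound q (Finset.mem_union_left _ hq)
      simp only [Finset.mem_product, Finset.mem_Icc, Finset.mem_singleton]
      exact ⟨⟨by omega, hPq.2⟩, hPq.1⟩
    · intro q hq
      simp only [Finset.mem_product, Finset.mem_Icc, Finset.mem_singleton] at hq
      exact ⟨hq.2, hq.1.2⟩
  have cright : ∑ q ∈ cv.support, (if q.2 = b ∧ a + 1 ≤ q.1 then cv q else 0)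
      = ∑ x ∈ Finset.Icc (a + 1) N, cv (x, b) := by
    rw [aux_support_sum cv _ ((Finset.Icc (a + 1) N) ×ˢ {b})]
    · rw [Finset.sum_product]
      simp
    · intro q hq hPq
      have := hbound q (Finset.mem_union_left _ hq)
      simp only [Finset.mem_product, Finset.mem_Icc, Finset.mem_singleton]
      exact ⟨⟨hPq.2, by omega⟩, hPq.1⟩
    · intro q hq
      simp only [Finset.mem_product, Finset.mem_Icc, Finset.mem_singleton] at hq
      exact ⟨hq.2, hq.1.1⟩
  have cdown : ∑ q ∈ ch.support, (if q.1 = a ∧ q.2 ≤ b then ch q else 0)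
      = ∑ y ∈ Finset.Icc (-N) b, ch (a, y) := by
    rw [aux_support_sum ch _ ({a} ×ˢ (Finset.Icc (-N) b))]
    · rw [Finset.sum_product]
      simp
    · intro q hq hPq
      have := hbound q (Finset.mem_union_right _ hq)
      simp only [Finset.mem_product, Finset.mem_Icc, Finset.mem_singleton]
      exact ⟨hPq.1, by omega, hPq.2⟩
    · intro q hq
      simp only [Finset.mem_product, Finset.mem_Icc, Finset.mem_singleton] at hq
      exact ⟨hq.1, hq.2.2⟩
  have cup : ∑ q ∈ ch.support, (if q.1 = a ∧ b + 1 ≤ q.2 then ch q else 0)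
      = ∑ y ∈ Finset.Icc (b + 1) N, ch (a, y) := by
    rw [aux_support_sum ch _ ({a} ×ˢ (Finset.Icc (b + 1) N))]
    · rw [Finset.sum_product]
      simp
    · intro q hq hPq
      have := hbound q (Finset.mem_union_right _ hq)
      simp only [Finset.mem_product, Finset.mem_Icc, Finset.mem_singleton]
      exact ⟨hPq.1, hPq.2, by omega⟩
    · intro q hq
      simp only [Finset.mem_product, Finset.mem_Icc, Finset.mem_singleton] at hq
      exact ⟨hq.1, hq.2.1⟩
  -- Rectangle B: lower-left quadrant: wleft = wdown
  have rB := rect (-N) a (-N) b haN.1 hbN.1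
  have rB' : ∑ x ∈ Finset.Icc (-N) a, cv (x, b) + ∑ y ∈ Finset.Icc (-N) b, ch (a, y) = 0 := by
    have e1 : ∑ x ∈ Finset.Icc (-N) a, (cv (x, -N - 1) - cv (x, b))
        = -∑ x ∈ Finset.Icc (-N) a, cv (x, b) := by
      rw [Finset.sum_sub_distrib]
      have : ∑ x ∈ Finset.Icc (-N) a, cv (x, -N - 1) = 0 := by
        apply Finset.sum_eq_zero; intro x _; exact hzv x (-N - 1) (by omega)
      rw [this]; ring
    have e2 : ∑ y ∈ Finset.Icc (-N) b, (ch (a, y) - ch (-N - 1, y))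
        = ∑ y ∈ Finset.Icc (-N) b, ch (a, y) := by
      rw [Finset.sum_sub_distrib]
      have : ∑ y ∈ Finset.Icc (-N) b, ch (-N - 1, y) = 0 := by
        apply Finset.sum_eq_zero; intro y _; exact hzh (-N - 1) y (by omega)
      rw [this]; ring
    rw [e1, e2] at rB
    linarith
  -- Rectangle C: upper-right quadrant: wright = wup
  have rC := rect (a + 1) N (b + 1) N haN.2 hbN.2
  have rC' : ∑ x ∈ Finset.Icc (a + 1) N, cv (x, b) + ∑ y ∈ Finset.Icc (b + 1) N, ch (a, y) = 0 := by
    have e1 : ∑ x ∈ Finset.Icc (a + 1) N, (cv (x, b + 1 - 1) - cv (x, N))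
        = ∑ x ∈ Finset.Icc (a + 1) N, cv (x, b) := by
      apply Finset.sum_congr rfl; intro x _
      have h0 : cv (x, N) = 0 := hzv x N (by omega)
      have : (b + 1 - 1 : ℤ) = b := by ring
      rw [this, h0]; ring
    have e2 : ∑ y ∈ Finset.Icc (b + 1) N, (ch (N, y) - ch (a + 1 - 1, y))
        = -∑ y ∈ Finset.Icc (b + 1) N, ch (a, y) := by
      rw [Finset.sum_sub_distrib]
      have h0 : ∑ y ∈ Finset.Icc (b + 1) N, ch (N, y) = 0 := by
        apply Finset.sum_eq_zero; intro y _; exact hzh N y (by omega)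
      have : (a + 1 - 1 : ℤ) = a := by ring
      rw [this, h0]; ring
    rw [e1, e2] at rC
    linarith
  -- Rectangle A: full-width lower half: row sum = 0
  have rA := rect (-N) N (-N) b (by omega) hbN.1
  have rA' : ∑ x ∈ Finset.Icc (-N) a, cv (x, b) + ∑ x ∈ Finset.Icc (a + 1) N, cv (x, b) = 0 := by
    have e1 : ∑ x ∈ Finset.Icc (-N) N, (cv (x, -N - 1) - cv (x, b))
        = -∑ x ∈ Finset.Icc (-N) N, cv (x, b) := by
      rw [Finset.sum_sub_distrib]
      have : ∑ x ∈ Finset.Icc (-N) N, cv (x, -N - 1) = 0 := by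
        apply Finset.sum_eq_zero; intro x _; exact hzv x (-N - 1) (by omega)
      rw [this]; ring
    have e2 : ∑ y ∈ Finset.Icc (-N) b, (ch (N, y) - ch (-N - 1, y)) = 0 := by
      apply Finset.sum_eq_zero; intro y _
      rw [hzh N y (by omega), hzh (-N - 1) y (by omega)]; ring
    rw [e1, e2] at rA
    have esplit : ∑ x ∈ Finset.Icc (-N) N, cv (x, b)
        = ∑ x ∈ Finset.Icc (-N) a, cv (x, b) + ∑ x ∈ Finset.Icc (a + 1) N, cv (x, b) := by
      rw [← Finset.sum_union]
      · apply Finset.sum_congr _ (fun _ _ => rfl)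
        ext t
        simp only [Finset.mem_Icc, Finset.mem_union]
        omega
      · rw [Finset.disjoint_left]
        intro t ht ht'
        simp only [Finset.mem_Icc] at ht ht'
        omega
    linarith
  refine ⟨?_, ?_, ?_⟩
  · show -∑ q ∈ cv.support, _ = ∑ q ∈ cv.support, _
    rw [cleft, cright]; linarith
  · show -∑ q ∈ cv.support, _ = ∑ q ∈ ch.support, _
    rw [cleft, cdown]; linarith
  · show -∑ q ∈ cv.support, _ = -∑ q ∈ ch.support, _
    rw [cleft, cup]; linarith
end

section
/- If C is a finite-dimensional chain complex over Z/2 and the reduction algorithm (repeatedly canceling a pair of vertices joined by an edge, replacing X_k by X_k Δ X_i whenever there is an edge X_k → X_j, and updating edges by mod-2 counting) terminates in a graph with no edges, then the labels of the remaining vertices form a basis for the homology H_*(C). -/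
/-- A state of the reduction algorithm: a directed graph whose vertices (a subset of
the original index set) are labeled by subsets of the basis `Fin m`. -/
structure LabeledGraph (m : ℕ) where
  verts : Finset (Fin m)
  label : Fin m → Finset (Fin m)
  edge : Fin m → Fin m → Bool

/-- One step of the reduction algorithm: choose an edge from `i` to `j`, delete both
vertices, replace the label `X k` by `X k Δ X i` whenever there was an edge `k → j`
(leaving it unchanged otherwise), and update edges by mod-2 counting: there is an edge
`k → l` in the new graph iff exactly one of `k`, `i` had an edge to `l` (when `k` had
an edge to `j`), resp. iff `k` had an edge to `l` (otherwise). -/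
def ReduceStep {m : ℕ} (G G' : LabeledGraph m) : Prop :=
  ∃ i ∈ G.verts, ∃ j ∈ G.verts, i ≠ j ∧ G.edge i j = true ∧
    G'.verts = (G.verts.erase i).erase j ∧
    (∀ k ∈ G'.verts,
      G'.label k = if G.edge k j then symmDiff (G.label k) (G.label i) else G.label k) ∧
    (∀ k ∈ G'.verts, ∀ l ∈ G'.verts,
      G'.edge k l = if G.edge k j then xor (G.edge k l) (G.edge i l) else G.edge k l)

abbrev CC (m : ℕ) := Fin m → ZMod 2

def vecF {m : ℕ} (S : Finset (Fin m)) : CC m := fun t => if t ∈ S then 1 else 0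

def bval (b : Bool) : ZMod 2 := if b then 1 else 0

lemma vecF_symmDiff {m : ℕ} (S T : Finset (Fin m)) :
    vecF (symmDiff S T) = vecF S + vecF T := by
  funext t
  simp only [vecF, Finset.mem_symmDiff, Pi.add_apply]
  by_cases hS : t ∈ S <;> by_cases hT : t ∈ T <;> simp [hS, hT] <;> decide

/-- The invariant maintained by the reduction algorithm. -/
def RInv {m : ℕ} (f : CC m →ₗ[ZMod 2] CC m) (G : LabeledGraph m) : Prop :=
  ∃ (r : ℕ) (a : Fin r → CC m) (φ : Fin r → (CC m →ₗ[ZMod 2] ZMod 2))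
    (Φ : Fin m → (CC m →ₗ[ZMod 2] ZMod 2)),
    G.verts.card + 2 * r = m ∧
    (∀ k ∈ G.verts, ∀ l ∈ G.verts, Φ l (f (vecF (G.label k))) = bval (G.edge k l)) ∧
    (∀ l ∈ G.verts, ∀ s, Φ l (f (a s)) = 0) ∧
    (∀ k ∈ G.verts, ∀ s, φ s (f (vecF (G.label k))) = 0) ∧
    (∀ s t, φ s (f (a t)) = (if s = t then 1 else 0)) ∧
    (∀ k ∈ G.verts, ∀ l ∈ G.verts, Φ l (vecF (G.label k)) = (if l = k then 1 else 0)) ∧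
    (∀ l ∈ G.verts, ∀ s, Φ l (a s) = 0) ∧
    (∀ k ∈ G.verts, ∀ s, φ s (vecF (G.label k)) = 0) ∧
    (∀ s t, φ s (a t) = 0)

lemma inv_step {m : ℕ} (f : CC m →ₗ[ZMod 2] CC m) {G G' : LabeledGraph m}
    (hstep : ReduceStep G G') (hinv : RInv f G) : RInv f G' := by
  obtain ⟨i, hi, j, hj, hij, hEij, hV', hlab, hedge⟩ := hstep
  obtain ⟨r, a, φ, Φ, hcard, hE, hP2, hP3, hP4, hP6, hP7, hP8, hP9⟩ := hinv
  have hji : j ≠ i := Ne.symm hij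
  have hmem' : ∀ k ∈ G'.verts, k ∈ G.verts ∧ k ≠ i ∧ k ≠ j := by
    intro k hk
    rw [hV'] at hk
    simp only [Finset.mem_erase] at hk
    tauto
  have hlabel' : ∀ k ∈ G'.verts,
      vecF (G'.label k) = vecF (G.label k) + bval (G.edge k j) • vecF (G.label i) := by
    intro k hk
    rw [hlab k hk]
    by_cases hb : G.edge k j = true
    · simp [hb, bval, vecF_symmDiff]
    · simp [hb, bval]
  refine ⟨r + 1, Fin.snoc a (vecF (G.label i)), Fin.snoc φ (Φ j),
    fun l => Φ l + bval (G.edge i l) • Φ j, ?_, ?_, ?_, ?_, ?_, ?_, ?_, ?_, ?_⟩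
  · have h1 : (G.verts.erase i).card + 1 = G.verts.card := Finset.card_erase_add_one hi
    have h2 : ((G.verts.erase i).erase j).card + 1 = (G.verts.erase i).card :=
      Finset.card_erase_add_one (Finset.mem_erase.mpr ⟨hji, hj⟩)
    rw [hV']
    omega
  · -- (E)
    intro k hk l hl
    obtain ⟨hkV, hki, hkj⟩ := hmem' k hk
    obtain ⟨hlV, hli, hlj⟩ := hmem' l hl
    rw [hlabel' k hk, hedge k hk l hl]
    simp only [map_add, map_smul, LinearMap.add_apply, LinearMap.smul_apply, smul_eq_mul]
    rw [hE k hkV l hlV, hE k hkV j hj, hE i hi l hlV, hE i hi j hj, hEij]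
    cases hb1 : G.edge k j <;> cases hb2 : G.edge k l <;> cases hb3 : G.edge i l <;> decide
  · -- (P2)
    intro l hl s
    obtain ⟨hlV, hli, hlj⟩ := hmem' l hl
    refine Fin.lastCases ?_ ?_ s
    · simp only [Fin.snoc_last, LinearMap.add_apply, LinearMap.smul_apply, smul_eq_mul]
      rw [hE i hi l hlV, hE i hi j hj, hEij]
      cases hb : G.edge i l <;> decide
    · intro t
      simp only [Fin.snoc_castSucc, LinearMap.add_apply, LinearMap.smul_apply, smul_eq_mul]
      rw [hP2 l hlV t, hP2 j hj t]
      ring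
  · -- (P3)
    intro k hk s
    obtain ⟨hkV, hki, hkj⟩ := hmem' k hk
    rw [hlabel' k hk]
    refine Fin.lastCases ?_ ?_ s
    · simp only [Fin.snoc_last, map_add, map_smul, smul_eq_mul]
      rw [hE k hkV j hj, hE i hi j hj, hEij]
      cases hb : G.edge k j <;> decide
    · intro t
      simp only [Fin.snoc_castSucc, map_add, map_smul, smul_eq_mul]
      rw [hP3 k hkV t, hP3 i hi t]
      ring
  · -- (P4)
    intro s t
    refine Fin.lastCases ?_ ?_ s <;> [skip; intro s'] <;>
      (refine Fin.lastCases ?_ ?_ t <;> [skip; intro t'])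
    · simp only [Fin.snoc_last, if_pos rfl]
      rw [hE i hi j hj, hEij]
      decide
    · simp only [Fin.snoc_last, Fin.snoc_castSucc]
      rw [hP2 j hj t', if_neg (Ne.symm (Fin.castSucc_lt_last t').ne)]
    · simp only [Fin.snoc_last, Fin.snoc_castSucc]
      rw [hP3 i hi s', if_neg (Fin.castSucc_lt_last s').ne]
    · simp only [Fin.snoc_castSucc]
      rw [hP4 s' t']
      simp [Fin.castSucc_inj]
  · -- (P6)
    intro k hk l hl
    obtain ⟨hkV, hki, hkj⟩ := hmem' k hk
    obtain ⟨hlV, hli, hlj⟩ := hmem' l hl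
    rw [hlabel' k hk]
    simp only [map_add, map_smul, LinearMap.add_apply, LinearMap.smul_apply, smul_eq_mul]
    rw [hP6 k hkV l hlV, hP6 i hi l hlV, hP6 k hkV j hj, hP6 i hi j hj]
    rw [if_neg hli, if_neg (Ne.symm hkj), if_neg hji]
    ring
  · -- (P7)
    intro l hl s
    obtain ⟨hlV, hli, hlj⟩ := hmem' l hl
    refine Fin.lastCases ?_ ?_ s
    · simp only [Fin.snoc_last, LinearMap.add_apply, LinearMap.smul_apply, smul_eq_mul]
      rw [hP6 i hi l hlV, hP6 i hi j hj, if_neg hli, if_neg hji]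
      ring
    · intro t
      simp only [Fin.snoc_castSucc, LinearMap.add_apply, LinearMap.smul_apply, smul_eq_mul]
      rw [hP7 l hlV t, hP7 j hj t]
      ring
  · -- (P8)
    intro k hk s
    obtain ⟨hkV, hki, hkj⟩ := hmem' k hk
    rw [hlabel' k hk]
    refine Fin.lastCases ?_ ?_ s
    · simp only [Fin.snoc_last, map_add, map_smul, smul_eq_mul]
      rw [hP6 k hkV j hj, hP6 i hi j hj, if_neg (Ne.symm hkj), if_neg hji]
      ring
    · intro t
      simp only [Fin.snoc_castSucc, map_add, map_smul, smul_eq_mul]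
      rw [hP8 k hkV t, hP8 i hi t]
      ring
  · -- (P9)
    intro s t
    refine Fin.lastCases ?_ ?_ s <;> [skip; intro s'] <;>
      (refine Fin.lastCases ?_ ?_ t <;> [skip; intro t'])
    · simp only [Fin.snoc_last]
      rw [hP6 i hi j hj, if_neg hji]
    · simp only [Fin.snoc_last, Fin.snoc_castSucc]
      rw [hP7 j hj t']
    · simp only [Fin.snoc_last, Fin.snoc_castSucc]
      rw [hP8 i hi s']
    · simp only [Fin.snoc_castSucc]
      rw [hP9 s' t']
lemma inv_init {m : ℕ} (d : Matrix (Fin m) (Fin m) (ZMod 2)) (G₀ : LabeledGraph m)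
    (h0v : G₀.verts = Finset.univ)
    (h0l : ∀ k : Fin m, G₀.label k = {k})
    (h0e : ∀ k l : Fin m, G₀.edge k l = true ↔ d k l = 1) :
    RInv (Matrix.transpose d).mulVecLin G₀ := by
  have hz : ∀ x : ZMod 2, x ≠ 1 → x = 0 := by decide
  have hvec : ∀ k : Fin m, vecF (G₀.label k) = Pi.single k 1 := by
    intro k
    funext t
    simp [vecF, h0l, Pi.single_apply]
  have hfv : ∀ k : Fin m, (Matrix.transpose d).mulVecLin (vecF (G₀.label k)) = fun l => d k l := by
    intro k
    rw [hvec]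
    funext l
    simp [Matrix.mulVecLin, Matrix.mulVec_single, Matrix.transpose_apply]
  have hdb : ∀ k l : Fin m, d k l = bval (G₀.edge k l) := by
    intro k l
    by_cases h : G₀.edge k l = true
    · simp [bval, h, (h0e k l).mp h]
    · have : d k l ≠ 1 := fun hc => h ((h0e k l).mpr hc)
      simp [bval, h, hz _ this]
  refine ⟨0, Fin.elim0, Fin.elim0, fun l => LinearMap.proj l, by simp [h0v], ?_, ?_, ?_, ?_, ?_, ?_, ?_, ?_⟩
  · intro k _ l _
    rw [hfv]
    simpa using hdb k l
  · exact fun l _ s => s.elim0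
  · exact fun k _ s => s.elim0
  · exact fun s => s.elim0
  · intro k _ l _
    rw [hvec]
    simp [Pi.single_apply]
  · exact fun l _ s => s.elim0
  · exact fun k _ s => s.elim0
  · exact fun s => s.elim0



set_option maxHeartbeats 1000000 in
/-- Correctness of the reduction algorithm.  `C = (Fin m → ℤ/2)` is the chain complex
with differential determined by the matrix `d` (so `d(x_k) = ∑_l d k l • x_l`,
`d² = 0`).  Starting from the graph `Γ₀` with vertices the singletons `{x_k}` and an
edge `k → l` iff `x_l` appears in `d(x_k)`, if repeated reduction steps terminate in a
graph `G` with no edges, then the vectors given by the labels of the remaining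
vertices are cycles whose homology classes form a basis of `H(C) = ker d / im d`. -/
theorem reduction_algorithm_computes_homology {m : ℕ}
    (d : Matrix (Fin m) (Fin m) (ZMod 2)) (hd : d * d = 0)
    (G₀ G : LabeledGraph m)
    (h0v : G₀.verts = Finset.univ)
    (h0l : ∀ k : Fin m, G₀.label k = {k})
    (h0e : ∀ k l : Fin m, G₀.edge k l = true ↔ d k l = 1)
    (hreach : Relation.ReflTransGen ReduceStep G₀ G)
    (hnoedge : ∀ k ∈ G.verts, ∀ l ∈ G.verts, G.edge k l = false) :
    let f := (Matrix.transpose d).mulVecLin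
    let vec : Finset (Fin m) → (Fin m → ZMod 2) := fun S t => if t ∈ S then 1 else 0
    ∃ hmem : ∀ k : {k : Fin m // k ∈ G.verts}, vec (G.label k.1) ∈ LinearMap.ker f,
      ∃ bas : Module.Basis {k : Fin m // k ∈ G.verts} (ZMod 2)
          (↥(LinearMap.ker f) ⧸
            Submodule.comap (LinearMap.ker f).subtype (LinearMap.range f)),
        ∀ k : {k : Fin m // k ∈ G.verts},
          bas k = Submodule.Quotient.mk ⟨vec (G.label k.1), hmem k⟩ := by
  intro f vec
  have hff : ∀ x, f (f x) = 0 := by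
    intro x
    show (Matrix.transpose d).mulVecLin ((Matrix.transpose d).mulVecLin x) = 0
    rw [← LinearMap.comp_apply, ← Matrix.mulVecLin_mul, ← Matrix.transpose_mul, hd]
    simp
  have hinv : RInv f G := by
    clear hnoedge
    induction hreach with
    | refl => exact inv_init d G₀ h0v h0l h0e
    | tail _ hstep ih => exact inv_step _ hstep ih
  obtain ⟨r, a, φ, Φ, hcard, hE, hP2, hP3, hP4, hP6, hP7, hP8, hP9⟩ := hinv
  set ι₀ := {k : Fin m // k ∈ G.verts} with hι₀
  set u : ι₀ ⊕ (Fin r ⊕ Fin r) → CC m :=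
    Sum.elim (fun k => vecF (G.label k.1)) (Sum.elim a (fun s => f (a s))) with hu
  set w : ι₀ ⊕ (Fin r ⊕ Fin r) → (CC m →ₗ[ZMod 2] ZMod 2) :=
    Sum.elim (fun l => Φ l.1) (Sum.elim (fun s => (φ s).comp f) φ) with hw
  have hpair : ∀ p q, w p (u q) = if p = q then 1 else 0 := by
    rintro (⟨l, hl⟩ | s | s) (⟨k, hk⟩ | t | t)
    · show Φ l (vecF (G.label k)) = _
      rw [hP6 k hk l hl]
      simp only [Sum.inl.injEq]
      rw [if_congr Subtype.mk_eq_mk rfl rfl]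
    · show Φ l (a t) = _
      rw [hP7 l hl t]
      simp
    · show Φ l (f (a t)) = _
      rw [hP2 l hl t]
      simp
    · show φ s (f (vecF (G.label k))) = _
      rw [hP3 k hk s]
      simp
    · show φ s (f (a t)) = _
      rw [hP4 s t]
      simp
    · show φ s (f (f (a t))) = _
      rw [hff, map_zero]
      simp
    · show φ s (vecF (G.label k)) = _
      rw [hP8 k hk s]
      simp
    · show φ s (a t) = _
      rw [hP9 s t]
      simp
    · show φ s (f (a t)) = _
      rw [hP4 s t]
      simp
  have hindep : LinearIndependent (ZMod 2) u := by
    rw [Fintype.linearIndependent_iff]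
    intro g hg p
    have h := congrArg (w p) hg
    simp only [map_sum, map_smul, smul_eq_mul, hpair, mul_ite, mul_one, mul_zero,
      map_zero] at h
    rwa [Finset.sum_ite_eq, if_pos (Finset.mem_univ p)] at h
  have hcardι : Fintype.card (ι₀ ⊕ (Fin r ⊕ Fin r)) = Module.finrank (ZMod 2) (CC m) := by
    rw [Module.finrank_fin_fun]
    simp only [Fintype.card_sum, Fintype.card_fin, hι₀, Fintype.card_coe]
    omega
  have hspan := hindep.span_eq_top_of_card_eq_finrank' hcardι
  set bu : Module.Basis (ι₀ ⊕ (Fin r ⊕ Fin r)) (ZMod 2) (CC m) := Module.Basis.mk hindep hspan.ge with hbu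
  have hbuc : ⇑bu = u := Module.Basis.coe_mk _ _
  have Hrep : ∀ x : CC m, ∑ p, w p x • u p = x := by
    intro x
    have hs := bu.sum_repr x
    rw [hbuc] at hs
    have hcoef : ∀ p, bu.repr x p = w p x := by
      intro p
      conv_rhs => rw [← hs]
      simp only [map_sum, map_smul, smul_eq_mul, hpair, mul_ite, mul_one, mul_zero]
      rw [Finset.sum_ite_eq, if_pos (Finset.mem_univ p)]
    calc ∑ p, w p x • u p = ∑ p, bu.repr x p • u p := by simp [hcoef]
    _ = x := hs
  have Htotal : ∀ x : CC m, (∀ p, w p x = 0) → x = 0 := by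
    intro x h
    rw [← Hrep x]
    simp [h]
  have hker1 : ∀ k : ι₀, f (vecF (G.label k.1)) = 0 := by
    intro k
    apply Htotal
    rintro (⟨l, hl⟩ | s | s)
    · show Φ l (f (vecF (G.label k.1))) = 0
      rw [hE k.1 k.2 l hl, hnoedge k.1 k.2 l hl]
      rfl
    · show φ s (f (f (vecF (G.label k.1)))) = 0
      rw [hff, map_zero]
    · exact hP3 k.1 k.2 s
  have hmem : ∀ k : ι₀, vec (G.label k.1) ∈ LinearMap.ker f := by
    intro k
    rw [LinearMap.mem_ker]
    exact hker1 k
  refine ⟨hmem, ?_⟩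
  have Hfx : ∀ x, f x ∈ Submodule.span (ZMod 2) (Set.range fun s => f (a s)) := by
    intro x
    rw [← Hrep x, map_sum]
    apply Submodule.sum_mem
    rintro (⟨l, hl⟩ | s | s) -
    · rw [map_smul]
      show _ • f (vecF (G.label l)) ∈ _
      rw [hker1 ⟨l, hl⟩, smul_zero]
      exact Submodule.zero_mem _
    · rw [map_smul]
      exact Submodule.smul_mem _ _ (Submodule.subset_span ⟨s, rfl⟩)
    · rw [map_smul]
      show _ • f (f (a s)) ∈ _
      rw [hff, smul_zero]
      exact Submodule.zero_mem _
  set N := Submodule.comap (LinearMap.ker f).subtype (LinearMap.range f) with hN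
  set q : ι₀ → (↥(LinearMap.ker f) ⧸ N) :=
    fun k => N.mkQ ⟨vec (G.label k.1), hmem k⟩ with hq
  have hPhib : ∀ l (hl : l ∈ G.verts) x,
      x ∈ Submodule.span (ZMod 2) (Set.range fun s => f (a s)) → Φ l x = 0 := by
    intro l hl x hx
    have hle : Submodule.span (ZMod 2) (Set.range fun s => f (a s)) ≤ LinearMap.ker (Φ l) := by
      rw [Submodule.span_le]
      rintro _ ⟨s, rfl⟩
      exact LinearMap.mem_ker.mpr (hP2 l hl s)
    exact LinearMap.mem_ker.mp (hle hx)
  have hindq : LinearIndependent (ZMod 2) q := by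
    rw [Fintype.linearIndependent_iff]
    intro g hg k₀
    set z : ↥(LinearMap.ker f) :=
      ∑ k, g k • (⟨vec (G.label k.1), hmem k⟩ : ↥(LinearMap.ker f)) with hz
    have hπz : N.mkQ z = 0 := by
      rw [hz, map_sum]
      simp only [map_smul]
      exact hg
    have hzN : z ∈ N := (Submodule.Quotient.mk_eq_zero N).mp
      (by rwa [Submodule.mkQ_apply] at hπz)
    have hzr : (z : CC m) ∈ LinearMap.range f := hzN
    obtain ⟨y, hy⟩ := hzr
    have h0 : Φ k₀.1 (z : CC m) = 0 := hPhib k₀.1 k₀.2 _ (hy ▸ Hfx y)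
    have hzc : (z : CC m) = ∑ k, g k • vecF (G.label k.1) := by
      rw [hz]
      push_cast
      rfl
    rw [hzc, map_sum] at h0
    have hterm : ∀ k : ι₀, Φ k₀.1 (g k • vecF (G.label k.1)) = if k₀ = k then g k else 0 := by
      intro k
      rw [map_smul, smul_eq_mul, hP6 k.1 k.2 k₀.1 k₀.2]
      by_cases h : k₀ = k
      · simp [h]
      · rw [if_neg (fun hc => h (Subtype.ext hc)), if_neg h, mul_zero]
    simp only [hterm] at h0
    rwa [Finset.sum_ite_eq, if_pos (Finset.mem_univ k₀)] at h0
  have hspanq : ⊤ ≤ Submodule.span (ZMod 2) (Set.range q) := by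
    rintro x -
    obtain ⟨z, rfl⟩ := N.mkQ_surjective x
    have hfz : f (z : CC m) = 0 := z.2
    set z₁ : ↥(LinearMap.ker f) :=
      ∑ k : ι₀, (Φ k.1 (z : CC m)) • (⟨vec (G.label k.1), hmem k⟩ : ↥(LinearMap.ker f)) with hz₁
    set z₂ : ↥(LinearMap.ker f) :=
      ∑ s : Fin r, (φ s (z : CC m)) •
        (⟨f (a s), LinearMap.mem_ker.mpr (hff (a s))⟩ : ↥(LinearMap.ker f)) with hz₂
    have hc1 : ((z₁ + z₂ : ↥(LinearMap.ker f)) : CC m)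
        = ∑ k : ι₀, (Φ k.1 (z : CC m)) • vecF (G.label k.1)
          + ∑ s : Fin r, (φ s (z : CC m)) • f (a s) := by
      rw [hz₁, hz₂]
      push_cast
      rfl
    have hm : ∀ s : Fin r, w (Sum.inr (Sum.inl s)) ((z : CC m)) • u (Sum.inr (Sum.inl s)) = 0 := by
      intro s
      show (φ s (f (z : CC m))) • a s = 0
      rw [hfz, map_zero, zero_smul]
    have hrep2 : ∑ k : ι₀, (Φ k.1 (z : CC m)) • vecF (G.label k.1)
          + ∑ s : Fin r, (φ s (z : CC m)) • f (a s) = (z : CC m) := by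
      conv_rhs => rw [← Hrep (z : CC m)]
      rw [Fintype.sum_sum_type, Fintype.sum_sum_type]
      simp only [hm, Finset.sum_const_zero, zero_add]
      rfl
    have hzz : z = z₁ + z₂ := by
      apply Subtype.ext
      rw [hc1]
      exact hrep2.symm
    rw [hzz, map_add]
    have h2 : N.mkQ z₂ = 0 := by
      rw [hz₂, map_sum]
      apply Finset.sum_eq_zero
      intro s _
      rw [map_smul]
      have hmN : (⟨f (a s), LinearMap.mem_ker.mpr (hff (a s))⟩ : ↥(LinearMap.ker f)) ∈ N :=
        ⟨a s, rfl⟩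
      rw [Submodule.mkQ_apply, (Submodule.Quotient.mk_eq_zero N).mpr hmN, smul_zero]
    rw [h2, add_zero, hz₁, map_sum]
    apply Submodule.sum_mem
    intro k _
    rw [map_smul]
    exact Submodule.smul_mem _ _ (Submodule.subset_span ⟨k, rfl⟩)
  refine ⟨Module.Basis.mk hindq hspanq, fun k => ?_⟩
  rw [Module.Basis.mk_apply, hq]
  exact Submodule.mkQ_apply _ _
end
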